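/- Assume m⁺ ≥ 1, m⁻ ≥ 1 and λ_max > 0. Then for every λ ∈ (0, λ_max], the function g attains its minimum over F_λ at a unique point; i.e., there exists a unique θ*_λ ∈ F_λ such that g(θ*_λ) ≤ g(θ) for all θ ∈ F_λ. -/

import Mathlib

/-- The dual objective `g(θ) = (1/m) Σ_i [θ_i log θ_i + (1−θ_i) log(1−θ_i)]`. -/
noncomputable def g (m : ℕ) (θ : Fin m → ℝ) : ℝ :=
  (1 / (m : ℝ)) * ∑ i, (θ i * Real.log (θ i) + (1 - θ i) * Real.log (1 - θ i))

/-- The gradient of `g`, componentwise `(1/m) log(θ_i/(1−θ_i))`. -/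
noncomputable def gradg (m : ℕ) (θ : Fin m → ℝ) : Fin m → ℝ :=
  fun i => (1 / (m : ℝ)) * Real.log (θ i / (1 - θ i))
/-- The dual feasible set `F_λ`: componentwise in `(0,1)`, `|⟨θ, x̄^j⟩| ≤ mλ` for all
columns `x̄^j = X j`, and `⟨θ, b⟩ = 0`. -/
def Feas (m p : ℕ) (X : Fin p → Fin m → ℝ) (b : Fin m → ℝ) (lam : ℝ) :
    Set (Fin m → ℝ) :=
  {θ | (∀ i, 0 < θ i ∧ θ i < 1) ∧ (∀ j, |∑ i, θ i * X j i| ≤ (m : ℝ) * lam) ∧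
    ∑ i, θ i * b i = 0}
open scoped Classical in
/-- `m⁺ = #{i : b_i = 1}`. -/
noncomputable def mPlus (m : ℕ) (b : Fin m → ℝ) : ℕ :=
  (Finset.univ.filter (fun i => b i = 1)).card

open scoped Classical in
/-- `m⁻ = #{i : b_i = −1}`. -/
noncomputable def mMinus (m : ℕ) (b : Fin m → ℝ) : ℕ :=
  (Finset.univ.filter (fun i => b i = -1)).card

open scoped Classical in
/-- `θ_max`, with `(θ_max)_i = m⁻/m` if `b_i = 1` and `m⁺/m` if `b_i = −1`. -/
noncomputable def thetaMax (m : ℕ) (b : Fin m → ℝ) : Fin m → ℝ :=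
  fun i => if b i = 1 then (mMinus m b : ℝ) / m else (mPlus m b : ℝ) / m

/-- `λ_max = (1/m) max_j |⟨θ_max, x̄^j⟩|`. -/
noncomputable def lamMax (m p : ℕ) (X : Fin p → Fin m → ℝ) (b : Fin m → ℝ) : ℝ :=
  (1 / (m : ℝ)) * ⨆ j : Fin p, |∑ i, thetaMax m b i * X j i|

noncomputable def hent (x : ℝ) : ℝ := x * Real.log x + (1 - x) * Real.log (1 - x)

lemma continuous_hent : Continuous hent :=
  Real.continuous_mul_log.add
    (Real.continuous_mul_log.comp (continuous_const.sub continuous_id))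

lemma convexOn_second : ConvexOn ℝ (Set.Iic (1:ℝ)) (fun x => (1 - x) * Real.log (1 - x)) := by
  refine ⟨convex_Iic 1, fun x hx y hy a b ha hb hab => ?_⟩
  have hx' : (0:ℝ) ≤ 1 - x := by simpa using hx
  have hy' : (0:ℝ) ≤ 1 - y := by simpa using hy
  have := Real.convexOn_mul_log.2 (Set.mem_Ici.2 hx') (Set.mem_Ici.2 hy') ha hb hab
  simp only [smul_eq_mul] at this ⊢
  have h1 : 1 - (a * x + b * y) = a * (1 - x) + b * (1 - y) := by ring_nf; linarith [hab]
  rw [h1]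
  exact this

lemma strictConvexOn_hent : StrictConvexOn ℝ (Set.Icc (0:ℝ) 1) hent := by
  have h1 : StrictConvexOn ℝ (Set.Icc (0:ℝ) 1) (fun x => x * Real.log x) :=
    Real.strictConvexOn_mul_log.subset (fun x hx => hx.1) (convex_Icc 0 1)
  have h2 : ConvexOn ℝ (Set.Icc (0:ℝ) 1) (fun x => (1 - x) * Real.log (1 - x)) :=
    convexOn_second.subset (fun x hx => hx.2) (convex_Icc 0 1)
  exact h1.add_convexOn h2

lemma mul_log_nonpos' {x : ℝ} (h0 : 0 ≤ x) (h1 : x ≤ 1) : x * Real.log x ≤ 0 :=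
  mul_nonpos_of_nonneg_of_nonpos h0 (Real.log_nonpos h0 h1)

lemma hent_nonpos {x : ℝ} (h : x ∈ Set.Icc (0:ℝ) 1) : hent x ≤ 0 := by
  have := mul_log_nonpos' h.1 h.2
  have := mul_log_nonpos' (by linarith [h.2] : (0:ℝ) ≤ 1 - x) (by linarith [h.1])
  unfold hent; linarith

lemma mul_log_ge {x : ℝ} (h0 : 0 ≤ x) (h1 : x ≤ 1) : -1 ≤ x * Real.log x := by
  rcases eq_or_lt_of_le h0 with h | h
  · simp [← h]
  · have hinv := Real.log_le_sub_one_of_pos (inv_pos.2 h)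
    rw [Real.log_inv] at hinv
    have hx : x * x⁻¹ = 1 := mul_inv_cancel₀ (ne_of_gt h)
    nlinarith

lemma hent_ge {x : ℝ} (h : x ∈ Set.Icc (0:ℝ) 1) : -2 ≤ hent x := by
  have := mul_log_ge h.1 h.2
  have := mul_log_ge (by linarith [h.2] : (0:ℝ) ≤ 1 - x) (by linarith [h.1])
  unfold hent; linarith

lemma hent_slope {a c : ℝ} (ha : a ∈ Set.Icc (0:ℝ) 1) (hc : c ∈ Set.Icc (0:ℝ) 1)
    {t : ℝ} (ht0 : 0 ≤ t) (ht1 : t ≤ 1) :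
    hent (a + t * (c - a)) ≤ hent a + t * (hent c - hent a) := by
  have := strictConvexOn_hent.convexOn.2 ha hc (by linarith : (0:ℝ) ≤ 1 - t) ht0 (by ring)
  simp only [smul_eq_mul] at this
  have he : (1 - t) * a + t * c = a + t * (c - a) := by ring
  rw [he] at this
  linarith

lemma hent_zero : hent 0 = 0 := by simp [hent]

lemma hent_one : hent 1 = 0 := by simp [hent]

lemma hent_one_sub (x : ℝ) : hent (1 - x) = hent x := by
  unfold hent; rw [sub_sub_cancel]; ring

lemma hent_td_bound {t d : ℝ} (ht0 : 0 < t) (hd0 : 0 < d) (htd : t * d ≤ 1) :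
    hent (t * d) ≤ t * d * (Real.log t + Real.log d) := by
  have hlog : Real.log (t * d) = Real.log t + Real.log d := Real.log_mul ht0.ne' hd0.ne'
  have h2 : (1 - t * d) * Real.log (1 - t * d) ≤ 0 :=
    mul_log_nonpos' (by linarith) (by nlinarith)
  unfold hent
  rw [hlog]
  linarith

lemma hent_mid_le {a b : ℝ} (ha : a ∈ Set.Icc (0:ℝ) 1) (hb : b ∈ Set.Icc (0:ℝ) 1) :
    hent ((a + b) / 2) ≤ (hent a + hent b) / 2 := by
  have := strictConvexOn_hent.convexOn.2 ha hb (by norm_num : (0:ℝ) ≤ 1/2)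
    (by norm_num : (0:ℝ) ≤ 1/2) (by norm_num)
  simp only [smul_eq_mul] at this
  have he : (1:ℝ)/2 * a + 1/2 * b = (a + b) / 2 := by ring
  rw [he] at this
  linarith

lemma hent_mid_lt {a b : ℝ} (ha : a ∈ Set.Icc (0:ℝ) 1) (hb : b ∈ Set.Icc (0:ℝ) 1)
    (hne : a ≠ b) : hent ((a + b) / 2) < (hent a + hent b) / 2 := by
  have := strictConvexOn_hent.2 ha hb hne (by norm_num : (0:ℝ) < 1/2)
    (by norm_num : (0:ℝ) < 1/2) (by norm_num)
  simp only [smul_eq_mul] at this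
  have he : (1:ℝ)/2 * a + 1/2 * b = (a + b) / 2 := by ring
  rw [he] at this
  linarith

open scoped Classical in
lemma mSum (m : ℕ) (b : Fin m → ℝ) (hb : ∀ i, b i = 1 ∨ b i = -1) :
    mPlus m b + mMinus m b = m := by
  have hne : (Finset.univ.filter (fun i : Fin m => b i = -1)) =
      (Finset.univ.filter (fun i : Fin m => ¬ (b i = 1))) := by
    refine Finset.filter_congr fun i _ => ?_
    rcases hb i with h | h <;> simp [h] <;> norm_num
  unfold mPlus mMinus
  rw [hne, Finset.card_filter_add_card_filter_not]
  simp

open scoped Classical in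
lemma thetaMax_mem (m : ℕ) (b : Fin m → ℝ) (hb : ∀ i, b i = 1 ∨ b i = -1)
    (hmp : 1 ≤ mPlus m b) (hmm : 1 ≤ mMinus m b) (i : Fin m) :
    0 < thetaMax m b i ∧ thetaMax m b i < 1 := by
  have hm : 0 < m := by have := mSum m b hb; omega
  have hmR : (0:ℝ) < m := by exact_mod_cast hm
  have hsum := mSum m b hb
  have h1 : mMinus m b < m := by omega
  have h2 : mPlus m b < m := by omega
  unfold thetaMax
  split_ifs with h
  · have hq : (0:ℝ) < mMinus m b := by exact_mod_cast hmm
    refine ⟨by positivity, ?_⟩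
    rw [div_lt_one hmR]; exact_mod_cast h1
  · have hp : (0:ℝ) < mPlus m b := by exact_mod_cast hmp
    refine ⟨by positivity, ?_⟩
    rw [div_lt_one hmR]; exact_mod_cast h2

open scoped Classical in
lemma thetaMax_dot_b (m : ℕ) (b : Fin m → ℝ) (hb : ∀ i, b i = 1 ∨ b i = -1) :
    ∑ i, thetaMax m b i * b i = 0 := by
  classical
  rw [← Finset.sum_filter_add_sum_filter_not Finset.univ (fun i => b i = 1)]
  have h1 : ∑ i ∈ Finset.univ.filter (fun i => b i = 1), thetaMax m b i * b i
      = (mPlus m b : ℝ) * ((mMinus m b : ℝ) / m) := by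
    rw [Finset.sum_congr rfl (fun i hi => ?_), Finset.sum_const, nsmul_eq_mul]
    · rfl
    · have hbi : b i = 1 := (Finset.mem_filter.1 hi).2
      unfold thetaMax
      rw [if_pos hbi, hbi, mul_one]
  have hne : (Finset.univ.filter (fun i : Fin m => ¬ b i = 1)) =
      (Finset.univ.filter (fun i : Fin m => b i = -1)) := by
    refine Finset.filter_congr fun i _ => ?_
    rcases hb i with h | h <;> simp [h] <;> norm_num
  have h2 : ∑ i ∈ Finset.univ.filter (fun i => ¬ b i = 1), thetaMax m b i * b i
      = (mMinus m b : ℝ) * (-((mPlus m b : ℝ) / m)) := by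
    rw [hne, Finset.sum_congr rfl (fun i hi => ?_), Finset.sum_const, nsmul_eq_mul]
    · rfl
    · have hbi : b i = -1 := (Finset.mem_filter.1 hi).2
      have hbi1 : ¬ b i = 1 := by rw [hbi]; norm_num
      unfold thetaMax
      rw [if_neg hbi1, hbi]
      ring
  rw [h1, h2]
  ring

lemma g_eq (m : ℕ) (θ : Fin m → ℝ) : g m θ = (1 / (m:ℝ)) * ∑ i, hent (θ i) := rfl

set_option maxHeartbeats 1000000 in
/-- Lemma B: for every `λ ∈ (0, λ_max]`, `g` attains its minimum over `F_λ` at a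
unique point. -/
theorem slores_dual_unique_minimizer (m p : ℕ) (hm : 1 ≤ m) (hp : 1 ≤ p)
    (X : Fin p → Fin m → ℝ) (b : Fin m → ℝ) (hb : ∀ i, b i = 1 ∨ b i = -1)
    (hmp : 1 ≤ mPlus m b) (hmm : 1 ≤ mMinus m b) (hlmax : 0 < lamMax m p X b)
    (lam : ℝ) (hlam : 0 < lam) (hle : lam ≤ lamMax m p X b) :
    ∃! θs : Fin m → ℝ, θs ∈ Feas m p X b lam ∧
      ∀ θ ∈ Feas m p X b lam, g m θs ≤ g m θ := by
  classical
  have hmR : (0:ℝ) < m := by exact_mod_cast hm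
  set L := lamMax m p X b with hL
  set tm := thetaMax m b with htmdef
  have htmm : ∀ i, 0 < tm i ∧ tm i < 1 := thetaMax_mem m b hb hmp hmm
  have htmb : ∑ i, tm i * b i = 0 := thetaMax_dot_b m b hb
  have htmX : ∀ j, |∑ i, tm i * X j i| ≤ (m:ℝ) * L := by
    intro j
    have hbdd : BddAbove (Set.range fun j : Fin p => |∑ i, tm i * X j i|) :=
      Set.Finite.bddAbove (Set.finite_range _)
    have hsup := le_ciSup hbdd j
    have hL' : (m:ℝ) * L = ⨆ j : Fin p, |∑ i, tm i * X j i| := by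
      rw [hL]; unfold lamMax; field_simp; rfl
    rw [hL']
    exact hsup
  set r := lam / L with hr
  have hr0 : 0 < r := div_pos hlam hlmax
  have hr1 : r ≤ 1 := (div_le_one hlmax).2 hle
  have hrL : r * L = lam := div_mul_cancel₀ lam (ne_of_gt hlmax)
  set θ0 : Fin m → ℝ := fun i => r * tm i with hθ0def
  have hθ0mem : ∀ i, 0 < θ0 i ∧ θ0 i < 1 := by
    intro i
    constructor
    · exact mul_pos hr0 (htmm i).1
    · calc r * tm i ≤ 1 * tm i := by
            apply mul_le_mul_of_nonneg_right hr1 (htmm i).1.le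
        _ = tm i := one_mul _
        _ < 1 := (htmm i).2
  have hθ0X : ∀ j, |∑ i, θ0 i * X j i| ≤ (m:ℝ) * lam := by
    intro j
    have hs : ∑ i, θ0 i * X j i = r * ∑ i, tm i * X j i := by
      rw [Finset.mul_sum]
      exact Finset.sum_congr rfl fun i _ => by rw [hθ0def]; ring
    rw [hs, abs_mul, abs_of_nonneg hr0.le]
    calc r * |∑ i, tm i * X j i| ≤ r * ((m:ℝ) * L) :=
          mul_le_mul_of_nonneg_left (htmX j) hr0.le
      _ = (m:ℝ) * (r * L) := by ring
      _ = (m:ℝ) * lam := by rw [hrL]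
  have hθ0b : ∑ i, θ0 i * b i = 0 := by
    have hs : ∑ i, θ0 i * b i = r * ∑ i, tm i * b i := by
      rw [Finset.mul_sum]
      exact Finset.sum_congr rfl fun i _ => by rw [hθ0def]; ring
    rw [hs, htmb, mul_zero]
  -- the compact relaxed set K
  set K : Set (Fin m → ℝ) := {θ | (∀ i, θ i ∈ Set.Icc (0:ℝ) 1) ∧
      (∀ j, |∑ i, θ i * X j i| ≤ (m:ℝ) * lam) ∧ ∑ i, θ i * b i = 0} with hKdef
  have hθ0K : θ0 ∈ K := ⟨fun i => ⟨(hθ0mem i).1.le, (hθ0mem i).2.le⟩, hθ0X, hθ0b⟩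
  have hKclosed : IsClosed K := by
    have c1 : IsClosed {θ : Fin m → ℝ | ∀ i, θ i ∈ Set.Icc (0:ℝ) 1} := by
      rw [Set.setOf_forall]
      exact isClosed_iInter fun i => isClosed_Icc.preimage (continuous_apply i)
    have c2 : IsClosed {θ : Fin m → ℝ | ∀ j, |∑ i, θ i * X j i| ≤ (m:ℝ) * lam} := by
      rw [Set.setOf_forall]
      exact isClosed_iInter fun j => isClosed_le
        ((continuous_finset_sum _ fun i _ => (continuous_apply i).mul continuous_const).abs)
        continuous_const
    have c3 : IsClosed {θ : Fin m → ℝ | ∑ i, θ i * b i = 0} :=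
      isClosed_eq (continuous_finset_sum _ fun i _ => (continuous_apply i).mul continuous_const)
        continuous_const
    exact c1.inter (c2.inter c3)
  have hKsub : K ⊆ Set.Icc (0 : Fin m → ℝ) 1 := by
    intro θ hθ
    rw [Set.mem_Icc]
    exact ⟨fun i => (hθ.1 i).1, fun i => (hθ.1 i).2⟩
  have hKcomp : IsCompact K := IsCompact.of_isClosed_subset isCompact_Icc hKclosed hKsub
  have hg : Continuous (g m) := by
    unfold g
    exact continuous_const.mul (continuous_finset_sum _ fun i _ =>
      (Real.continuous_mul_log.comp (continuous_apply i)).add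
        (Real.continuous_mul_log.comp (continuous_const.sub (continuous_apply i))))
  obtain ⟨θs, hθsK, hminK⟩ := hKcomp.exists_isMinOn ⟨θ0, hθ0K⟩ hg.continuousOn
  have hminK' : ∀ θ ∈ K, g m θs ≤ g m θ := fun θ hθ => hminK hθ
  -- the minimizer lies in the open box
  have hint : ∀ i, 0 < θs i ∧ θs i < 1 := by
    by_contra hcon
    push_neg at hcon
    obtain ⟨i0, hi0⟩ := hcon
    have hbd : θs i0 = 0 ∨ θs i0 = 1 := by
      have h01 := hθsK.1 i0
      rcases eq_or_lt_of_le h01.1 with h | h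
      · exact Or.inl h.symm
      · exact Or.inr (le_antisymm h01.2 (hi0 h))
    set d : ℝ := if θs i0 = 0 then θ0 i0 else 1 - θ0 i0 with hd
    have hd0 : 0 < d := by
      rw [hd]; split_ifs
      · exact (hθ0mem i0).1
      · linarith [(hθ0mem i0).2]
    have hd1 : d ≤ 1 := by
      rw [hd]; split_ifs
      · linarith [(hθ0mem i0).2]
      · linarith [(hθ0mem i0).1]
    set t : ℝ := min (1/2) (Real.exp (-(d * Real.log d + 2*m + 1)/d)) with htdef
    have ht0 : 0 < t := lt_min (by norm_num) (Real.exp_pos _)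
    have ht2 : t ≤ 1/2 := min_le_left _ _
    have ht1 : t ≤ 1 := ht2.trans (by norm_num)
    have hlogt : d * Real.log t ≤ -(d * Real.log d + 2*m + 1) := by
      have h1 : Real.log t ≤ -(d * Real.log d + 2*m + 1)/d := by
        have h2 : t ≤ Real.exp (-(d * Real.log d + 2*m + 1)/d) := min_le_right _ _
        calc Real.log t ≤ Real.log (Real.exp (-(d * Real.log d + 2*m + 1)/d)) :=
              Real.log_le_log ht0 h2
          _ = -(d * Real.log d + 2*m + 1)/d := Real.log_exp _
      calc d * Real.log t ≤ d * (-(d * Real.log d + 2*m + 1)/d) :=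
            mul_le_mul_of_nonneg_left h1 hd0.le
        _ = -(d * Real.log d + 2*m + 1) := by field_simp
    set θt : Fin m → ℝ := fun i => θs i + t * (θ0 i - θs i) with hθtdef
    have hθtmem : ∀ i, θt i ∈ Set.Icc (0:ℝ) 1 := by
      intro i
      have h1 := hθsK.1 i
      have h2 := hθ0mem i
      rw [hθtdef]
      constructor
      · simp only
        nlinarith [h1.1, h1.2, h2.1, h2.2, ht0, ht1]
      · simp only
        nlinarith [h1.1, h1.2, h2.1, h2.2, ht0, ht1]
    have hsumlin : ∀ c : Fin m → ℝ,
        ∑ i, θt i * c i = (1-t) * (∑ i, θs i * c i) + t * (∑ i, θ0 i * c i) := by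
      intro c
      rw [Finset.mul_sum, Finset.mul_sum, ← Finset.sum_add_distrib]
      refine Finset.sum_congr rfl fun i _ => ?_
      rw [hθtdef]; ring
    have hθtK : θt ∈ K := by
      refine ⟨hθtmem, fun j => ?_, ?_⟩
      · rw [hsumlin]
        calc |(1-t) * (∑ i, θs i * X j i) + t * (∑ i, θ0 i * X j i)|
            ≤ |(1-t) * (∑ i, θs i * X j i)| + |t * (∑ i, θ0 i * X j i)| := abs_add_le _ _
          _ = (1-t) * |∑ i, θs i * X j i| + t * |∑ i, θ0 i * X j i| := by
              rw [abs_mul, abs_mul, abs_of_nonneg (by linarith : (0:ℝ) ≤ 1-t),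
                abs_of_nonneg ht0.le]
          _ ≤ (1-t) * ((m:ℝ)*lam) + t * ((m:ℝ)*lam) := by
              have := hθsK.2.1 j
              have := hθ0X j
              have h1t : (0:ℝ) ≤ 1 - t := by linarith
              gcongr
          _ = (m:ℝ)*lam := by ring
      · rw [hsumlin, hθsK.2.2, hθ0b]; ring
    -- the key decrease
    have hi0t : hent (θt i0) ≤ t * d * (Real.log t + Real.log d) ∧ hent (θs i0) = 0 := by
      have htd1 : t * d ≤ 1 := by nlinarith
      rcases hbd with h | h
      · have he : θt i0 = t * d := by
          rw [hθtdef]; simp only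
          rw [h, hd, if_pos h]; ring
        rw [he, h]
        exact ⟨hent_td_bound ht0 hd0 htd1, hent_zero⟩
      · have hne0 : ¬ θs i0 = 0 := by rw [h]; norm_num
        have he : θt i0 = 1 - t * d := by
          rw [hθtdef]; simp only
          rw [h, hd, if_neg hne0]; ring
        rw [he, h, hent_one_sub]
        exact ⟨hent_td_bound ht0 hd0 htd1, hent_one⟩
    have hother : ∀ i, i ≠ i0 → hent (θt i) ≤ hent (θs i) + t * 2 := by
      intro i _
      have hsl := hent_slope (hθsK.1 i) ⟨(hθ0mem i).1.le, (hθ0mem i).2.le⟩ ht0.le ht1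
      have hA : hent (θ0 i) ≤ 0 := hent_nonpos ⟨(hθ0mem i).1.le, (hθ0mem i).2.le⟩
      have hB : -2 ≤ hent (θs i) := hent_ge (hθsK.1 i)
      have he : θt i = θs i + t * (θ0 i - θs i) := by rw [hθtdef]
      rw [he]
      nlinarith [ht0.le]
    have hkey : ∑ i, hent (θt i) < ∑ i, hent (θs i) := by
      rw [Fintype.sum_eq_add_sum_compl i0 (fun i => hent (θt i)),
        Fintype.sum_eq_add_sum_compl i0 (fun i => hent (θs i))]
      have hrest : ∑ i ∈ {i0}ᶜ, hent (θt i) ≤ (∑ i ∈ {i0}ᶜ, hent (θs i)) + ({i0}ᶜ : Finset (Fin m)).card * (t * 2) := by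
        have := Finset.sum_le_sum (f := fun i => hent (θt i))
          (g := fun i => hent (θs i) + t * 2) (s := {i0}ᶜ)
          (fun i hi => hother i (Finset.mem_compl.1 hi ∘ Finset.mem_singleton.2 ∘ id))
        rwa [Finset.sum_add_distrib, Finset.sum_const, nsmul_eq_mul] at this
      have hcard : (({i0}ᶜ : Finset (Fin m)).card : ℝ) ≤ (m:ℝ) := by
        have h1 : ({i0}ᶜ : Finset (Fin m)).card ≤ Fintype.card (Fin m) := Finset.card_le_univ _
        rw [Fintype.card_fin] at h1
        exact_mod_cast h1
      have h1 : hent (θt i0) ≤ t * (d * Real.log t) + t * (d * Real.log d) := by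
        have h1' := hi0t.1
        have he : t * d * (Real.log t + Real.log d)
            = t * (d * Real.log t) + t * (d * Real.log d) := by ring
        linarith [he ▸ h1']
      have h2 : t * (d * Real.log t) ≤ t * (-(d * Real.log d + 2*m + 1)) :=
        mul_le_mul_of_nonneg_left hlogt ht0.le
      have h2' : t * (-(d * Real.log d + 2*m + 1))
          = -(t * (d * Real.log d)) - 2*((m:ℝ)*t) - t := by ring
      have h3 : ({i0}ᶜ : Finset (Fin m)).card * (t * 2) ≤ (m:ℝ) * (t * 2) := by
        have ht2' : (0:ℝ) ≤ t * 2 := by linarith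
        exact mul_le_mul_of_nonneg_right hcard ht2'
      have h3' : (m:ℝ) * (t * 2) = 2*((m:ℝ)*t) := by ring
      rw [hi0t.2]
      have hfin : hent (θt i0) + ∑ i ∈ {i0}ᶜ, hent (θt i)
          < 0 + ∑ i ∈ {i0}ᶜ, hent (θs i) := by
        rw [h2'] at h2
        rw [h3'] at h3
        linarith [hrest, h1, h2, h3, ht0]
      exact hfin
    have hlt : g m θt < g m θs := by
      rw [g_eq, g_eq]
      exact mul_lt_mul_of_pos_left hkey (by positivity)
    exact absurd (hminK' θt hθtK) (not_le.2 hlt)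
  have hθsF : θs ∈ Feas m p X b lam := ⟨hint, hθsK.2.1, hθsK.2.2⟩
  have hFsub : Feas m p X b lam ⊆ K := fun θ hθ =>
    ⟨fun i => ⟨(hθ.1 i).1.le, (hθ.1 i).2.le⟩, hθ.2.1, hθ.2.2⟩
  have hminF : ∀ θ ∈ Feas m p X b lam, g m θs ≤ g m θ := fun θ hθ => hminK' θ (hFsub hθ)
  refine ⟨θs, ⟨hθsF, hminF⟩, ?_⟩
  rintro θ' ⟨hθ'F, hθ'min⟩
  by_contra hne
  obtain ⟨i1, hi1⟩ := Function.ne_iff.1 hne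
  have hgeq : ∑ i, hent (θ' i) = ∑ i, hent (θs i) := by
    have h1 : g m θ' ≤ g m θs := hθ'min θs hθsF
    have h2 : g m θs ≤ g m θ' := hminF θ' hθ'F
    have h3 : g m θ' = g m θs := le_antisymm h1 h2
    rw [g_eq, g_eq] at h3
    have hne0 : (1 / (m:ℝ)) ≠ 0 := by positivity
    exact mul_left_cancel₀ hne0 h3
  set μ : Fin m → ℝ := fun i => (θ' i + θs i) / 2 with hμdef
  have hμmem : ∀ i, 0 < μ i ∧ μ i < 1 := by
    intro i
    have h1 := hθ'F.1 i
    have h2 := hθsF.1 i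
    rw [hμdef]
    constructor
    · simp only; linarith [h1.1, h2.1]
    · simp only; linarith [h1.2, h2.2]
  have hμlin : ∀ c : Fin m → ℝ,
      ∑ i, μ i * c i = ((∑ i, θ' i * c i) + ∑ i, θs i * c i) / 2 := by
    intro c
    rw [← Finset.sum_add_distrib, Finset.sum_div]
    refine Finset.sum_congr rfl fun i _ => ?_
    rw [hμdef]; ring
  have hμF : μ ∈ Feas m p X b lam := by
    refine ⟨hμmem, fun j => ?_, ?_⟩
    · rw [hμlin]
      calc |((∑ i, θ' i * X j i) + ∑ i, θs i * X j i) / 2|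
          ≤ (|∑ i, θ' i * X j i| + |∑ i, θs i * X j i|) / 2 := by
            rw [abs_div, abs_two]
            gcongr
            exact abs_add_le _ _
        _ ≤ (((m:ℝ)*lam) + ((m:ℝ)*lam)) / 2 := by
            have := hθ'F.2.1 j
            have := hθsF.2.1 j
            gcongr
        _ = (m:ℝ)*lam := by ring
    · rw [hμlin, hθ'F.2.2, hθsF.2.2]; norm_num
  have hsumlt : ∑ i, hent (μ i) < ∑ i, hent (θs i) := by
    have hle' : ∀ i ∈ Finset.univ, hent (μ i) ≤ (hent (θ' i) + hent (θs i)) / 2 := by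
      intro i _
      have h1 := hθ'F.1 i
      have h2 := hθsF.1 i
      exact hent_mid_le ⟨h1.1.le, h1.2.le⟩ ⟨h2.1.le, h2.2.le⟩
    have hlt' : hent (μ i1) < (hent (θ' i1) + hent (θs i1)) / 2 := by
      have h1 := hθ'F.1 i1
      have h2 := hθsF.1 i1
      exact hent_mid_lt ⟨h1.1.le, h1.2.le⟩ ⟨h2.1.le, h2.2.le⟩ hi1
    calc ∑ i, hent (μ i) < ∑ i, (hent (θ' i) + hent (θs i)) / 2 :=
          Finset.sum_lt_sum hle' ⟨i1, Finset.mem_univ i1, hlt'⟩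
      _ = ((∑ i, hent (θ' i)) + ∑ i, hent (θs i)) / 2 := by
          rw [← Finset.sum_add_distrib, Finset.sum_div]
      _ = ∑ i, hent (θs i) := by rw [hgeq]; ring
  have hglt : g m μ < g m θs := by
    rw [g_eq, g_eq]
    exact mul_lt_mul_of_pos_left hsumlt (by positivity)
  exact absurd (hminF μ hμF) (not_le.2 hglt)
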